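/- If condition (H1) is satisfied, then the spectral radius of the linear Hammerstein operator L satisfies r(L) ≥ ‖Lθ‖_∞ > 0. -/

import Mathlib

open MeasureTheory
open scoped ENNReal

namespace HammersteinAux

noncomputable abbrev E := C(unitInterval, ℝ) →L[ℝ] C(unitInterval, ℝ)

set_option maxHeartbeats 1000000 in
set_option synthInstance.maxHeartbeats 1000000 in
noncomputable instance instNSE : NormedSpace ℝ E := inferInstance

instance instBSE : IsBoundedSMul ℝ E := @NormedSpace.toIsBoundedSMul ℝ E _ _ instNSE

set_option maxHeartbeats 1000000 in
set_option synthInstance.maxHeartbeats 1000000 in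
noncomputable instance instNRE : NormedRing E := inferInstance

set_option maxHeartbeats 1000000 in
set_option synthInstance.maxHeartbeats 1000000 in
noncomputable instance instAlgE : NormedAlgebra ℝ E := inferInstance

set_option maxHeartbeats 1000000 in
set_option synthInstance.maxHeartbeats 1000000 in
instance instCSE : CompleteSpace E := inferInstance

set_option maxHeartbeats 1000000 in
set_option synthInstance.maxHeartbeats 1000000 in
instance instHSGE : HasSummableGeomSeries E := inferInstance

set_option maxHeartbeats 1000000
set_option synthInstance.maxHeartbeats 400000

lemma smul_mul_E (a : ℝ) (S T : E) : (a • S) * T = a • (S * T) := rfl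

lemma mul_smul_E (a : ℝ) (S T : E) : S * (a • T) = a • (S * T) := by
  ext v t
  simp [ContinuousLinearMap.mul_apply]

/-- Positivity (cone-preserving) of an operator. -/
def Pos (T : E) : Prop := ∀ v : C(unitInterval, ℝ), (∀ t, 0 ≤ v t) → ∀ t, 0 ≤ T v t

/-- evaluation of an operator at a function and a point, as a continuous linear map. -/
noncomputable def ev (v : C(unitInterval, ℝ)) (t : unitInterval) : E →L[ℝ] ℝ :=
  (ContinuousMap.evalCLM ℝ t).comp (ContinuousLinearMap.apply ℝ C(unitInterval, ℝ) v)

@[simp] lemma ev_apply (v : C(unitInterval, ℝ)) (t : unitInterval) (T : E) :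
    ev v t T = T v t := rfl

lemma Pos.mul {S T : E} (hS : Pos S) (hT : Pos T) : Pos (S * T) := by
  intro v hv t
  exact hS (T v) (fun s => hT v hv s) t

lemma Pos.smul {T : E} (hT : Pos T) {a : ℝ} (ha : 0 ≤ a) : Pos (a • T) := by
  intro v hv t
  have h : (a • T) v t = a * T v t := rfl
  rw [h]
  exact mul_nonneg ha (hT v hv t)

lemma Pos.one : Pos (1 : E) := by
  intro v hv t
  simpa using hv t

lemma Pos.pow {T : E} (hT : Pos T) : ∀ n, Pos (T ^ n) := by
  intro n
  induction n with
  | zero => simpa using Pos.one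
  | succ n ih => rw [pow_succ]; exact ih.mul hT

lemma Pos.tsum {f : ℕ → E} (hs : Summable f) (hf : ∀ n, Pos (f n)) : Pos (∑' n, f n) := by
  intro v hv t
  have h1 : (ev v t) (∑' n, f n) = ∑' n, (ev v t) (f n) :=
    (ev v t).map_tsum hs
  have h2 : (∑' n, f n) v t = ∑' n, (f n) v t := by simpa using h1
  rw [h2]
  exact tsum_nonneg fun n => hf n v hv t

lemma isClosed_pos : IsClosed {T : E | Pos T} := by
  have h : {T : E | Pos T} =
      ⋂ (v : C(unitInterval, ℝ)), ⋂ (_ : ∀ t, 0 ≤ v t), ⋂ (t : unitInterval),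
        (ev v t) ⁻¹' Set.Ici 0 := by
    ext T
    simp only [Set.mem_setOf_eq, Set.mem_iInter, Set.mem_preimage, Set.mem_Ici, ev_apply]
    rfl
  rw [h]
  exact isClosed_iInter fun v => isClosed_iInter fun hv => isClosed_iInter fun t =>
    IsClosed.preimage (ev v t).continuous isClosed_Ici

lemma ring_inverse_eq {a b : E} (h1 : a * b = 1) (h2 : b * a = 1) : Ring.inverse a = b := by
  have h : a = ((⟨a, b, h1, h2⟩ : Eˣ) : E) := rfl
  rw [h, Ring.inverse_unit]
  rfl

/-- Resolvent of `L` at `lam`. -/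
noncomputable def res (L : E) (lam : ℝ) : E := Ring.inverse (algebraMap ℝ E lam - L)

lemma algebraMap_eq (lam : ℝ) : algebraMap ℝ E lam = lam • (1 : E) :=
  Algebra.algebraMap_eq_smul_one lam

/-- Neumann series: for `lam > ‖L‖` the resolvent exists and is positive. -/
lemma res_pos_of_big (L : E) (hposL : Pos L) (lam : ℝ) (hlam : ‖L‖ < lam) :
    IsUnit (algebraMap ℝ E lam - L) ∧ Pos (res L lam) := by
  have hlam0 : 0 < lam := lt_of_le_of_lt (norm_nonneg L) hlam
  set x : E := lam⁻¹ • L with hx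
  have hxnorm : ‖x‖ < 1 := by
    rw [hx, norm_smul, norm_inv, Real.norm_of_nonneg hlam0.le, inv_mul_lt_one₀ hlam0]
    exact hlam
  have hfact : algebraMap ℝ E lam - L = lam • ((1 : E) - x) := by
    rw [algebraMap_eq, smul_sub, hx, smul_smul, mul_inv_cancel₀ hlam0.ne', one_smul]
  have hsum : Summable (fun n => x ^ n) := summable_geometric_of_norm_lt_one hxnorm
  have hmul1 : (algebraMap ℝ E lam - L) * (lam⁻¹ • ∑' n, x ^ n) = 1 := by
    rw [hfact, smul_mul_E, mul_smul_E, smul_smul, mul_inv_cancel₀ hlam0.ne', one_smul,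
      mul_neg_geom_series x hxnorm]
  have hmul2 : (lam⁻¹ • ∑' n, x ^ n) * (algebraMap ℝ E lam - L) = 1 := by
    rw [hfact, smul_mul_E, mul_smul_E, smul_smul, inv_mul_cancel₀ hlam0.ne', one_smul,
      geom_series_mul_neg x hxnorm]
  refine ⟨⟨⟨_, _, hmul1, hmul2⟩, rfl⟩, ?_⟩
  show Pos (Ring.inverse (algebraMap ℝ E lam - L))
  rw [ring_inverse_eq hmul1 hmul2]
  have hxpos : Pos x := by
    rw [hx]
    exact hposL.smul (inv_nonneg.mpr hlam0.le)
  exact (Pos.tsum hsum (fun n => hxpos.pow n)).smul (inv_nonneg.mpr hlam0.le)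

/-- Resolvent positivity propagates downwards. -/
lemma res_pos_step (L : E) (mu lam : ℝ)
    (hunit : IsUnit (algebraMap ℝ E mu - L)) (hpos : Pos (res L mu))
    (hle : lam ≤ mu) (hsmall : (mu - lam) * ‖res L mu‖ < 1) :
    Pos (res L lam) := by
  set R : E := res L mu with hR
  set x : E := (mu - lam) • R with hx
  have hxnorm : ‖x‖ < 1 := by
    rw [hx, norm_smul, Real.norm_of_nonneg (by linarith)]
    rw [hR]
    exact hsmall
  have hMR : (algebraMap ℝ E mu - L) * R = 1 := Ring.mul_inverse_cancel _ hunit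
  have hRM : R * (algebraMap ℝ E mu - L) = 1 := Ring.inverse_mul_cancel _ hunit
  have hfact : algebraMap ℝ E lam - L = (algebraMap ℝ E mu - L) * ((1 : E) - x) := by
    rw [mul_sub, mul_one, hx, mul_smul_E, hMR, algebraMap_eq lam, algebraMap_eq mu]
    module
  have hsum : Summable (fun n => x ^ n) := summable_geometric_of_norm_lt_one hxnorm
  have hg1 : ((1 : E) - x) * (∑' n, x ^ n) = 1 := mul_neg_geom_series x hxnorm
  have hg2 : (∑' n, x ^ n) * ((1 : E) - x) = 1 := geom_series_mul_neg x hxnorm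
  set B : E := (∑' n, x ^ n) * R with hB
  have hmul1 : (algebraMap ℝ E lam - L) * B = 1 := by
    rw [hfact, hB]
    calc (algebraMap ℝ E mu - L) * ((1 : E) - x) * ((∑' n, x ^ n) * R)
        = (algebraMap ℝ E mu - L) * (((1 : E) - x) * (∑' n, x ^ n)) * R := by
          rw [mul_assoc, mul_assoc, mul_assoc]
      _ = 1 := by rw [hg1, mul_one, hMR]
  have hmul2 : B * (algebraMap ℝ E lam - L) = 1 := by
    rw [hfact, hB]
    calc (∑' n, x ^ n) * R * ((algebraMap ℝ E mu - L) * ((1 : E) - x))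
        = (∑' n, x ^ n) * (R * (algebraMap ℝ E mu - L)) * ((1 : E) - x) := by
          rw [mul_assoc, mul_assoc, mul_assoc]
      _ = 1 := by rw [hRM, mul_one, hg2]
  show Pos (Ring.inverse (algebraMap ℝ E lam - L))
  rw [ring_inverse_eq hmul1 hmul2]
  have hxpos : Pos x := hpos.smul (by linarith)
  exact (Pos.tsum hsum (fun n => hxpos.pow n)).mul hpos

/-- continuity of the resolvent at a unit point. -/
lemma res_continuousAt (L : E) (lam : ℝ) (hunit : IsUnit (algebraMap ℝ E lam - L)) :
    ContinuousAt (res L) lam := by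
  obtain ⟨u, hu⟩ := hunit
  have h1 : Continuous (fun m : ℝ => algebraMap ℝ E m - L) := by
    simp only [algebraMap_eq]
    exact (continuous_id.smul continuous_const).sub continuous_const
  have h2 : ContinuousAt Ring.inverse (algebraMap ℝ E lam - L) := by
    rw [← hu]
    exact NormedRing.inverse_continuousAt u
  have h3 : ContinuousAt (fun m : ℝ => algebraMap ℝ E m - L) lam := h1.continuousAt
  show ContinuousAt (fun m : ℝ => Ring.inverse (algebraMap ℝ E m - L)) lam
  exact ContinuousAt.comp (g := Ring.inverse (M₀ := E))
    (f := fun m : ℝ => algebraMap ℝ E m - L) h2 h3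

/-- Abstract key lemma: if `L` is a positive operator and `u ≥ 0`, `u ≠ 0`,
`L u ≥ c u` pointwise with `c > 0`, then `r(L) ≥ c`. -/
lemma spectralRadius_ge (L : E) (hposL : Pos L) (u : C(unitInterval, ℝ)) (hu : ∀ t, 0 ≤ u t)
    (hune : u ≠ 0) (c : ℝ) (hc : 0 < c) (hLu : ∀ t, c * u t ≤ L u t) :
    ENNReal.ofReal c ≤ spectralRadius ℝ L := by
  by_contra hcon
  push_neg at hcon
  -- every `lam ≥ c` is in the resolvent set
  have hunit : ∀ lam : ℝ, c ≤ lam → IsUnit (algebraMap ℝ E lam - L) := by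
    intro lam hlam
    rw [← spectrum.notMem_iff]
    intro hmem
    have h1 : (‖lam‖₊ : ℝ≥0∞) ≤ spectralRadius ℝ L :=
      le_iSup₂ (f := fun k (_ : k ∈ spectrum ℝ L) => (‖k‖₊ : ℝ≥0∞)) lam hmem
    have h2 : ENNReal.ofReal c ≤ (‖lam‖₊ : ℝ≥0∞) := by
      rw [show (‖lam‖₊ : ℝ≥0∞) = ENNReal.ofReal ‖lam‖ from (ofReal_norm lam).symm, Real.norm_of_nonneg (hc.le.trans hlam)]
      exact ENNReal.ofReal_le_ofReal hlam
    exact absurd (h2.trans h1) (not_le.mpr hcon)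
  set M : ℝ := max (‖L‖ + 1) c with hM
  have hcM : c ≤ M := le_max_right _ _
  have hMbig : ‖L‖ < M := lt_of_lt_of_le (lt_add_one _) (le_max_left _ _)
  -- the set of lower endpoints of intervals of positivity of the resolvent
  set T : Set ℝ := {lam | lam ∈ Set.Icc c M ∧ ∀ x ∈ Set.Icc lam M, Pos (res L x)} with hT
  have hMT : M ∈ T := by
    have hMIcc : M ∈ Set.Icc c M := Set.mem_Icc.mpr ⟨hcM, le_refl M⟩
    refine ⟨hMIcc, ?_⟩
    intro x hx
    have hxM : x = M := le_antisymm hx.2 hx.1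
    rw [hxM]
    exact (res_pos_of_big L hposL M hMbig).2
  have hTne : T.Nonempty := ⟨M, hMT⟩
  have hTbdd : BddBelow T := ⟨c, fun x hx => hx.1.1⟩
  set b : ℝ := sInf T with hb
  have hbc : c ≤ b := le_csInf hTne (fun x hx => hx.1.1)
  have hbM : b ≤ M := csInf_le hTbdd hMT
  -- positivity of `res L x` for `b < x ≤ M`
  have hQ : ∀ x : ℝ, b < x → x ≤ M → Pos (res L x) := by
    intro x hbx hxM
    obtain ⟨lam, hlamT, hlamx⟩ := exists_lt_of_csInf_lt hTne hbx
    exact hlamT.2 x ⟨hlamx.le, hxM⟩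
  -- positivity at `b` itself (by closedness of positivity and continuity of resolvent)
  have hbpos : Pos (res L b) := by
    rcases eq_or_lt_of_le hbM with heq | hlt
    · rw [heq]; exact hMT.2 M ⟨le_refl M, le_refl M⟩
    · -- b < M : approach b from the right
      have hcont : ContinuousAt (res L) b := res_continuousAt L b (hunit b hbc)
      have hseq : Filter.Tendsto (fun n : ℕ => b + (M - b) / (n + 2)) Filter.atTop (nhds b) := by
        have h1 : Filter.Tendsto (fun n : ℕ => (M - b) / ((n : ℝ) + 2)) Filter.atTop (nhds 0) := by
          apply Filter.Tendsto.div_atTop (tendsto_const_nhds)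
          exact Filter.tendsto_atTop_add_const_right _ 2 (tendsto_natCast_atTop_atTop)
        simpa using tendsto_const_nhds.add h1
      have hmem : ∀ n : ℕ, Pos (res L (b + (M - b) / (n + 2))) := by
        intro n
        have hn0 : (0:ℝ) < (n:ℝ) + 2 := by positivity
        refine hQ _ ?_ ?_
        · have hp : (0:ℝ) < (M - b) / ((n:ℝ) + 2) := div_pos (by linarith) hn0
          linarith
        · have h2 : (M - b) / ((n:ℝ) + 2) ≤ (M - b) := by
            apply div_le_self (by linarith)
            have hnn : (0:ℝ) ≤ (n:ℝ) := Nat.cast_nonneg n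
            linarith
          linarith
      have htend : Filter.Tendsto (fun n : ℕ => res L (b + (M - b) / (n + 2)))
          Filter.atTop (nhds (res L b)) := hcont.tendsto.comp hseq
      exact isClosed_pos.mem_of_tendsto htend (Filter.Eventually.of_forall hmem)
  -- b must equal c
  have hbeq : b = c := by
    by_contra hne
    have hcb : c < b := lt_of_le_of_ne hbc (Ne.symm hne)
    set δ : ℝ := min (b - c) (1 / (‖res L b‖ + 1)) with hδ
    have hRb0 : (0:ℝ) < ‖res L b‖ + 1 := by positivity
    have hδpos : 0 < δ := lt_min (by linarith) (by positivity)
    set lam : ℝ := b - δ / 2 with hlam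
    have hδbc : δ ≤ b - c := min_le_left _ _
    have hlamc : c ≤ lam := by rw [hlam]; linarith
    have hlamb : lam < b := by rw [hlam]; linarith
    have hlamT : lam ∈ T := by
      have hlamIcc : lam ∈ Set.Icc c M := Set.mem_Icc.mpr ⟨hlamc, by linarith⟩
      refine ⟨hlamIcc, ?_⟩
      intro x hx
      rcases lt_or_ge x b with hxb | hbx
      · -- use the step lemma from b
        apply res_pos_step L b x (hunit b hbc) hbpos hxb.le
        have h1 : b - x ≤ δ / 2 := by
          have h1' := hx.1
          rw [hlam] at h1'
          linarith
        have h2 : δ ≤ 1 / (‖res L b‖ + 1) := min_le_right _ _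
        have h4 : (b - x) * ‖res L b‖ ≤ (δ / 2) * (‖res L b‖ + 1) := by
          apply mul_le_mul h1 (by linarith [norm_nonneg (res L b)]) (norm_nonneg _)
          linarith
        have h5 : (δ / 2) * (‖res L b‖ + 1) < 1 := by
          have h6 : δ * (‖res L b‖ + 1) ≤ 1 := by
            calc δ * (‖res L b‖ + 1) ≤ (1 / (‖res L b‖ + 1)) * (‖res L b‖ + 1) :=
                  mul_le_mul_of_nonneg_right h2 hRb0.le
              _ = 1 := by field_simp
          nlinarith
        linarith
      · rcases eq_or_lt_of_le hbx with heq | hlt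
        · rw [← heq]; exact hbpos
        · exact hQ x hlt hx.2
    have hble : b ≤ lam := csInf_le hTbdd hlamT
    linarith
  -- now use positivity of the resolvent at c to derive a contradiction
  have hcpos : Pos (res L c) := by rw [← hbeq]; exact hbpos
  have hcunit : IsUnit (algebraMap ℝ E c - L) := hunit c (le_refl c)
  set w : C(unitInterval, ℝ) := (algebraMap ℝ E c - L) u with hw
  have hwval : ∀ t, w t = c * u t - L u t := by
    intro t
    rw [hw]
    have h0 : (algebraMap ℝ E c - L) u = (algebraMap ℝ E c) u - L u := rfl
    rw [h0]
    have h2 : (algebraMap ℝ E c) u = c • u := by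
      rw [algebraMap_eq]
      rfl
    simp [h2]
  have hwnonpos : ∀ t, 0 ≤ (-w) t := by
    intro t
    have h1 : (-w) t = -(w t) := rfl
    rw [h1, hwval t]
    linarith [hLu t]
  have hres : res L c (-w) = -u := by
    have h1 : res L c * (algebraMap ℝ E c - L) = 1 := Ring.inverse_mul_cancel _ hcunit
    have h3 : (res L c * (algebraMap ℝ E c - L)) u = u := by rw [h1]; rfl
    have h4 : res L c w = u := by
      rw [hw]
      exact h3
    rw [map_neg, h4]
  have hu0 : ∀ t, u t = 0 := by
    intro t
    have h1 : 0 ≤ (res L c) (-w) t := hcpos (-w) hwnonpos t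
    rw [hres] at h1
    have h2 : (-u) t = -(u t) := rfl
    rw [h2] at h1
    linarith [hu t]
  exact hune (ContinuousMap.ext fun t => hu0 t)

end HammersteinAux

/-- Under condition (H1), the spectral radius of the linear
Hammerstein operator `L` satisfies `r(L) ≥ ‖Lθ‖_∞ > 0`. -/
theorem hammerstein_spectral_radius_positive
    (k : unitInterval → unitInterval → ℝ)
    (hkcont : Continuous (Function.uncurry k))
    (hknonneg : ∀ t s, 0 ≤ k t s)
    (hksymm : ∀ t s, k t s = k s t)
    (L : C(unitInterval, ℝ) →L[ℝ] C(unitInterval, ℝ))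
    (hL : ∀ (u : C(unitInterval, ℝ)) (t : unitInterval), L u t = ∫ s, k t s * u s)
    -- (H1)
    (θ : C(unitInterval, ℝ)) (hθnonneg : ∀ t, 0 ≤ θ t)
    (hH1 : ∀ t s q, θ t * k q s ≤ k t s)
    (hLθpos : 0 < ‖L θ‖) :
    ENNReal.ofReal ‖L θ‖ ≤ spectralRadius ℝ L ∧ 0 < spectralRadius ℝ L := by
  classical
  have hkc : ∀ t : unitInterval, Continuous (fun s => k t s) := by
    intro t
    exact hkcont.comp (Continuous.prodMk_right t)
  have hint : ∀ (t : unitInterval) (v : C(unitInterval, ℝ)),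
      Integrable (fun s => k t s * v s) := by
    intro t v
    exact (((hkc t).mul v.continuous).integrable_of_hasCompactSupport
      (HasCompactSupport.of_compactSpace _))
  -- positivity of L
  have hposL : HammersteinAux.Pos L := by
    intro v hv t
    rw [hL]
    exact integral_nonneg fun s => mul_nonneg (hknonneg t s) (hv s)
  have hunonneg : ∀ t, 0 ≤ L θ t := hposL θ hθnonneg
  -- maximum of L θ is attained
  obtain ⟨q, -, hq⟩ := isCompact_univ.exists_isMaxOn (Set.univ_nonempty)
    ((L θ).continuous.continuousOn)
  have hq' : ∀ t, L θ t ≤ L θ q := fun t => hq (Set.mem_univ t)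
  have huq : L θ q = ‖L θ‖ := by
    refine le_antisymm ((le_abs_self _).trans ?_) ?_
    · rw [← Real.norm_eq_abs]
      exact (L θ).norm_coe_le_norm q
    · refine (ContinuousMap.norm_le _ (le_trans (hunonneg q) (hq' q))).mpr ?_
      intro t
      rw [Real.norm_eq_abs, abs_of_nonneg (hunonneg t)]
      exact hq' t
  -- L θ ≥ θ * ‖L θ‖ pointwise
  have hθle : ∀ t, θ t * ‖L θ‖ ≤ L θ t := by
    intro t
    have h1 : θ t * L θ q ≤ L θ t := by
      rw [hL θ t, hL θ q, ← integral_const_mul]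
      apply integral_mono ((hint q θ).const_mul _) (hint t θ)
      intro s
      simp only
      rw [← mul_assoc]
      exact mul_le_mul_of_nonneg_right (hH1 t s q) (hθnonneg s)
    rwa [huq] at h1
  -- L (L θ) ≥ ‖L θ‖ • L θ pointwise
  have hLu : ∀ t, ‖L θ‖ * L θ t ≤ L (L θ) t := by
    intro t
    rw [hL (L θ) t]
    have h1 : ‖L θ‖ * L θ t = ∫ s, ‖L θ‖ * (k t s * θ s) := by
      rw [integral_const_mul, ← hL θ t]
    rw [h1]
    apply integral_mono ((hint t θ).const_mul _) (hint t (L θ))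
    intro s
    simp only
    calc ‖L θ‖ * (k t s * θ s) = k t s * (θ s * ‖L θ‖) := by ring
      _ ≤ k t s * L θ s := mul_le_mul_of_nonneg_left (hθle s) (hknonneg t s)
  have hune : L θ ≠ 0 := by
    intro h0
    rw [h0, norm_zero] at hLθpos
    exact lt_irrefl 0 hLθpos
  have hmain : ENNReal.ofReal ‖L θ‖ ≤ spectralRadius ℝ L :=
    HammersteinAux.spectralRadius_ge L hposL (L θ) hunonneg hune ‖L θ‖ hLθpos hLu
  exact ⟨hmain, lt_of_lt_of_le (by simpa using ENNReal.ofReal_pos.mpr hLθpos) hmain⟩
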